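/- arXiv:1410.8116 — 2 statements merged into one kernel-verified Lean document; each statement's English description precedes it below -/
import Mathlib

section
/- Let S be a finite set of real numbers with at least two elements, let m = min S and M = max S, and let d be a real number with d ∉ S and d > m. Then (M − m)·Δ((S ∪ {d}) \ {M})·Δ(S \ {m}) = (d − m)·Δ(S)·Δ((S ∪ {d}) \ {m, M}). -/
/-- `Δ(A) = ∏_{x,y ∈ A, x < y} (y - x)`. -/
noncomputable def delta (A : Finset ℝ) : ℝ :=
  ∏ x ∈ A, ∏ y ∈ A.filter (fun y => x < y), (y - x)

lemma delta_insert (B : Finset ℝ) (a : ℝ) (ha : a ∉ B) :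
    delta (insert a B) = delta B * (∏ x ∈ B, if x < a then a - x else 1) *
      (∏ x ∈ B, if a < x then x - a else 1) := by
  unfold delta
  rw [Finset.prod_insert ha]
  have hrow : (∏ y ∈ (insert a B).filter (fun y => a < y), (y - a))
      = ∏ x ∈ B, if a < x then x - a else 1 := by
    rw [Finset.filter_insert, if_neg (lt_irrefl a), Finset.prod_filter]
  have hbig : (∏ x ∈ B, ∏ y ∈ (insert a B).filter (fun y => x < y), (y - x))
      = ∏ x ∈ B, ((if x < a then a - x else 1) * ∏ y ∈ B.filter (fun y => x < y), (y - x)) := by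
    refine Finset.prod_congr rfl (fun x hx => ?_)
    rw [Finset.filter_insert]
    by_cases h : x < a
    · rw [if_pos h, Finset.prod_insert (fun hmem => ha (Finset.mem_filter.mp hmem).1), if_pos h]
    · rw [if_neg h, if_neg h, one_mul]
  rw [hrow, hbig, Finset.prod_mul_distrib]
  ring

/-- Ratio simplification (23) of the paper, multiplied out. -/
theorem delta_ratio_23 (S : Finset ℝ) (m M d : ℝ)
    (hcard : 2 ≤ S.card)
    (hmS : m ∈ S) (hm : ∀ x ∈ S, m ≤ x)
    (hMS : M ∈ S) (hM : ∀ x ∈ S, x ≤ M)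
    (hdS : d ∉ S) (hmd : m < d) :
    (M - m) * delta ((insert d S).erase M) * delta (S.erase m) =
      (d - m) * delta S * delta (((insert d S).erase m).erase M) := by
  have hmM : m < M := by
    by_contra h
    push_neg at h
    have hsub : S ⊆ {m} := fun x hx =>
      Finset.mem_singleton.mpr (le_antisymm ((hM x hx).trans h) (hm x hx))
    have := Finset.card_le_card hsub
    simp at this; omega
  have hdM : d ≠ M := fun h => hdS (h ▸ hMS)
  have hdm : d ≠ m := (ne_of_gt hmd)
  set C := (S.erase m).erase M with hC
  have hMC : M ∉ C := Finset.notMem_erase _ _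
  have hCsub : C ⊆ S := (Finset.erase_subset _ _).trans (Finset.erase_subset _ _)
  have hmC : m ∉ C := fun h => (Finset.notMem_erase m _) (Finset.mem_of_mem_erase h)
  have hdC : d ∉ C := fun h => hdS (hCsub h)
  have hMem : M ∈ S.erase m := Finset.mem_erase.mpr ⟨ne_of_gt hmM, hMS⟩
  have h1 : S.erase m = insert M C := (Finset.insert_erase hMem).symm
  have hmeM : m ∈ S.erase M := Finset.mem_erase.mpr ⟨ne_of_lt hmM, hmS⟩
  have h2 : S.erase M = insert m C := by
    rw [hC, Finset.erase_right_comm]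
    exact (Finset.insert_erase hmeM).symm
  have hS : S = insert m (insert M C) := by rw [← h1, Finset.insert_erase hmS]
  have h3 : (insert d S).erase M = insert d (S.erase M) := Finset.erase_insert_of_ne hdM
  have h4 : ((insert d S).erase m).erase M = insert d C := by
    rw [Finset.erase_insert_of_ne hdm, Finset.erase_insert_of_ne hdM, ← hC]
  have hmMC : m ∉ insert M C := by
    simp [hmC, ne_of_lt hmM]
  have hdmC : d ∉ insert m C := by
    simp [hdC, hdm]
  rw [h3, h2, h4, h1, hS,
    delta_insert _ _ hdmC, delta_insert _ _ hmC,
    delta_insert _ _ hmMC, delta_insert _ _ hMC,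
    delta_insert _ _ hdC,
    Finset.prod_insert hmC, Finset.prod_insert hmC,
    Finset.prod_insert hMC, Finset.prod_insert hMC,
    if_pos hmd, if_neg (not_lt.mpr hmd.le), if_pos hmM, if_neg (not_lt.mpr hmM.le)]
  ring
end

section
/- Let S be a finite set of real numbers with at least two elements, let m = min S and M = max S, and let d be a real number with d ∉ S. Then (M + m)·⋆((S ∪ {d}) \ {m})·⋆(S \ {M}) = (M + d)·⋆(S)·⋆((S ∪ {d}) \ {m, M}). -/
/-- `⋆(A) = ∏_{x,y ∈ A, x < y} (x + y)`. -/
noncomputable def starOp' (A : Finset ℝ) : ℝ :=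
  ∏ x ∈ A, ∏ y ∈ A.filter (fun y => x < y), (x + y)

lemma star_insert (a : ℝ) (A : Finset ℝ) (ha : a ∉ A) :
    starOp' (insert a A) = (∏ x ∈ A, (a + x)) * starOp' A := by
  unfold starOp'
  rw [Finset.prod_insert ha]
  have h1 : (insert a A).filter (fun y => a < y) = A.filter (fun y => a < y) := by
    rw [Finset.filter_insert]; simp
  rw [h1]
  have h2 : ∀ x ∈ A, (∏ y ∈ (insert a A).filter (fun y => x < y), (x + y))
      = (if x < a then (x + a) else 1) * ∏ y ∈ A.filter (fun y => x < y), (x + y) := by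
    intro x hx
    rw [Finset.filter_insert]
    split_ifs with h
    · rw [Finset.prod_insert (by simp [ha])]
    · rw [one_mul]
  rw [Finset.prod_congr rfl h2, Finset.prod_mul_distrib]
  have e1 : A.filter (fun x => ¬ x < a) = A.filter (fun y => a < y) := by
    apply Finset.filter_congr
    intro x hx
    have hne : x ≠ a := fun h => ha (h ▸ hx)
    simp only [not_lt, eq_iff_iff]
    exact ⟨fun h => lt_of_le_of_ne h (Ne.symm hne), le_of_lt⟩
  have h3 : (∏ x ∈ A, (if x < a then (x + a) else 1)) *
      ∏ y ∈ A.filter (fun y => a < y), (a + y) = ∏ x ∈ A, (a + x) := by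
    rw [Finset.prod_ite, Finset.prod_const_one, mul_one, ← e1,
      ← Finset.prod_filter_mul_prod_filter_not A (fun x => x < a) (fun x => a + x)]
    congr 1
    exact Finset.prod_congr rfl (fun x _ => add_comm x a)
  rw [← h3]; ring

/-- Even-case analogue of the ratio simplification (22). -/
theorem star'_ratio_22 (S : Finset ℝ) (m M d : ℝ)
    (hcard : 2 ≤ S.card)
    (hmS : m ∈ S) (hm : ∀ x ∈ S, m ≤ x)
    (hMS : M ∈ S) (hM : ∀ x ∈ S, x ≤ M)
    (hdS : d ∉ S) :
    (M + m) * starOp' ((insert d S).erase m) * starOp' (S.erase M) =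
      (M + d) * starOp' S * starOp' (((insert d S).erase m).erase M) := by
  obtain ⟨b, hbS, hbm⟩ := Finset.exists_mem_ne (show 1 < S.card by omega) m
  have hmM : m < M := lt_of_lt_of_le (lt_of_le_of_ne (hm b hbS) (Ne.symm hbm)) (hM b hbS)
  have hdm : d ≠ m := fun h => hdS (h ▸ hmS)
  have hdM : d ≠ M := fun h => hdS (h ▸ hMS)
  set T := S.erase m with hT
  have hmT : m ∉ T := Finset.notMem_erase m S
  have hMT : M ∈ T := Finset.mem_erase.mpr ⟨hmM.ne', hMS⟩
  have hdT : d ∉ T := fun h => hdS (Finset.mem_of_mem_erase h)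
  have hdTM : d ∉ T.erase M := fun h => hdT (Finset.mem_of_mem_erase h)
  have hmTM : m ∉ T.erase M := fun h => hmT (Finset.mem_of_mem_erase h)
  have e1 : (insert d S).erase m = insert d T := Finset.erase_insert_of_ne hdm
  have e2 : ((insert d S).erase m).erase M = insert d (T.erase M) := by
    rw [e1, Finset.erase_insert_of_ne hdM]
  have e3 : S = insert m T := (Finset.insert_erase hmS).symm
  have e4 : S.erase M = insert m (T.erase M) := by
    have h : T.erase M = (S.erase M).erase m := Finset.erase_right_comm
    rw [h]
    exact (Finset.insert_erase (Finset.mem_erase.mpr ⟨hmM.ne, hmS⟩)).symm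
  rw [e2, e1, e4]
  rw [star_insert d T hdT, star_insert m (T.erase M) hmTM,
    star_insert d (T.erase M) hdTM]
  have e5 : starOp' S = (∏ x ∈ T, (m + x)) * starOp' T := by
    rw [e3, star_insert m T hmT]
  rw [e5]
  rw [← Finset.mul_prod_erase T (fun x => d + x) hMT,
    ← Finset.mul_prod_erase T (fun x => m + x) hMT]
  ring
end
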